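/- Let X be a finite set of size n, let A and B be disjoint subsets of X, let ρ : X → {1, …, n} be a bijection, and let r ∈ {1, …, n−1} be such that ρ⁻¹(r) ∈ A and ρ⁻¹(r+1) ∈ B. Let τρ denote the ranking obtained from ρ by composing with the transposition of the values r and r+1. Then min(XInv_ρ(A,B), XInv_ρ(B,A)) = min(XInv_{τρ}(A,B), XInv_{τρ}(B,A)) if and only if XInv_ρ(A,B) − XInv_ρ(B,A) = −1. -/

import Mathlib

/-- The number of cross inversions from `S` to `T` with respect to the ranking `σ`:
`XInv_σ(S,T) = #{(x, y) ∈ S × T : σ(x) > σ(y)}`. -/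
def XInv {X : Type*} [DecidableEq X] {n : ℕ} (σ : X ≃ Fin n) (S T : Finset X) : ℕ :=
  ((S ×ˢ T).filter (fun p => σ p.2 < σ p.1)).card

lemma swap_lt_key {n : ℕ} (r r' : Fin n) (hr : (r' : ℕ) = (r : ℕ) + 1)
    (i j : Fin n) (hi : i ≠ r') (hj : j ≠ r) :
    Equiv.swap r r' j < Equiv.swap r r' i ↔ (j < i ∨ (i = r ∧ j = r')) := by
  simp only [Equiv.swap_apply_def]
  split_ifs <;> simp only [Fin.lt_def, Fin.ext_iff, not_and] at * <;> omega

lemma swap_lt_key2 {n : ℕ} (r r' : Fin n) (hr : (r' : ℕ) = (r : ℕ) + 1)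
    (i j : Fin n) (hi : i ≠ r) (hj : j ≠ r') :
    Equiv.swap r r' j < Equiv.swap r r' i ↔ (j < i ∧ ¬(i = r' ∧ j = r)) := by
  simp only [Equiv.swap_apply_def]
  split_ifs <;> simp only [Fin.lt_def, Fin.ext_iff, not_and] at * <;> omega

theorem stmt17 (X : Type*) [Fintype X] [DecidableEq X] (n : ℕ)
    (hcard : Fintype.card X = n) (A B : Finset X) (hAB : Disjoint A B)
    (ρ : X ≃ Fin n) (r r' : Fin n) (hr : (r' : ℕ) = (r : ℕ) + 1)
    (hA : ρ.symm r ∈ A) (hB : ρ.symm r' ∈ B) :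
    (min (XInv ρ A B) (XInv ρ B A)
        = min (XInv (ρ.trans (Equiv.swap r r')) A B) (XInv (ρ.trans (Equiv.swap r r')) B A))
      ↔ (XInv ρ A B : ℤ) - (XInv ρ B A : ℤ) = -1 := by
  set a := ρ.symm r with ha
  set b := ρ.symm r' with hb
  have hρa : ρ a = r := ρ.apply_symm_apply r
  have hρb : ρ b = r' := ρ.apply_symm_apply r'
  have hbA : b ∉ A := fun h => (Finset.disjoint_left.mp hAB h) hB
  have haB : a ∉ B := fun h => Finset.disjoint_left.mp hAB hA h
  -- x ∈ A → ρ x ≠ r',  y ∈ B → ρ y ≠ r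
  have hxA : ∀ x ∈ A, ρ x ≠ r' := by
    intro x hx h
    exact hbA (by rwa [hb, ← h, Equiv.symm_apply_apply])
  have hyB : ∀ y ∈ B, ρ y ≠ r := by
    intro y hy h
    exact haB (by rwa [ha, ← h, Equiv.symm_apply_apply])
  -- XInv σ A B = XInv ρ A B + 1
  have h1 : XInv (ρ.trans (Equiv.swap r r')) A B = XInv ρ A B + 1 := by
    unfold XInv
    have hset : ((A ×ˢ B).filter (fun p => (ρ.trans (Equiv.swap r r')) p.2 < (ρ.trans (Equiv.swap r r')) p.1))
        = insert (a, b) ((A ×ˢ B).filter (fun p => ρ p.2 < ρ p.1)) := by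
      ext p; obtain ⟨x, y⟩ := p
      simp only [Finset.mem_filter]
      simp only [Finset.mem_filter, Finset.mem_product, Finset.mem_insert, Equiv.trans_apply,
        Prod.mk.injEq]
      constructor
      · rintro ⟨⟨hx, hy⟩, hlt⟩
        rw [swap_lt_key r r' hr _ _ (hxA x hx) (hyB y hy)] at hlt
        rcases hlt with hlt | ⟨h1, h2⟩
        · exact Or.inr ⟨⟨hx, hy⟩, hlt⟩
        · exact Or.inl ⟨by rw [ha, ← h1, Equiv.symm_apply_apply],
            by rw [hb, ← h2, Equiv.symm_apply_apply]⟩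
      · rintro (⟨rfl, rfl⟩ | ⟨⟨hx, hy⟩, hlt⟩)
        · refine ⟨⟨hA, hB⟩, ?_⟩
          rw [swap_lt_key r r' hr _ _ (hxA a hA) (hyB b hB)]
          exact Or.inr ⟨hρa, hρb⟩
        · refine ⟨⟨hx, hy⟩, ?_⟩
          rw [swap_lt_key r r' hr _ _ (hxA x hx) (hyB y hy)]
          exact Or.inl hlt
    rw [hset, Finset.card_insert_of_notMem]
    simp only [Finset.mem_filter, Finset.mem_product, not_and]
    intro _
    simp only [hρa, hρb, Fin.lt_def, hr]
    omega
  -- XInv ρ B A = XInv σ B A + 1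
  have h2 : XInv ρ B A = XInv (ρ.trans (Equiv.swap r r')) B A + 1 := by
    unfold XInv
    have hset : ((B ×ˢ A).filter (fun p => ρ p.2 < ρ p.1))
        = insert (b, a) ((B ×ˢ A).filter (fun p => (ρ.trans (Equiv.swap r r')) p.2 < (ρ.trans (Equiv.swap r r')) p.1)) := by
      ext p; obtain ⟨x, y⟩ := p
      simp only [Finset.mem_insert, Finset.mem_filter]
      simp only [Finset.mem_filter, Finset.mem_product, Finset.mem_insert, Equiv.trans_apply,
        Prod.mk.injEq]
      constructor
      · rintro ⟨⟨hx, hy⟩, hlt⟩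
        by_cases hc : ρ x = r' ∧ ρ y = r
        · exact Or.inl ⟨by rw [hb, ← hc.1, Equiv.symm_apply_apply],
            by rw [ha, ← hc.2, Equiv.symm_apply_apply]⟩
        · refine Or.inr ⟨⟨hx, hy⟩, ?_⟩
          rw [swap_lt_key2 r r' hr _ _ (hyB x hx) (hxA y hy)]
          exact ⟨hlt, hc⟩
      · rintro (⟨rfl, rfl⟩ | ⟨⟨hx, hy⟩, hlt⟩)
        · refine ⟨⟨hB, hA⟩, ?_⟩
          simp only [hρa, hρb, Fin.lt_def, hr]
          omega
        · rw [swap_lt_key2 r r' hr _ _ (hyB x hx) (hxA y hy)] at hlt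
          exact ⟨⟨hx, hy⟩, hlt.1⟩
    rw [hset, Finset.card_insert_of_notMem]
    simp only [Finset.mem_filter, Finset.mem_product, not_and]
    intro _
    simp only [Equiv.trans_apply, hρa, hρb, Equiv.swap_apply_left, Equiv.swap_apply_right,
      Fin.lt_def, hr]
    omega
  rw [h1]
  omega
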